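/- Let A = Q' \ Q'' be an annulus where Q' and Q'' are concentric axis-parallel cubes with side lengths ℓ' and ℓ'' satisfying ℓ' − ℓ'' = 2r. Then for any axis-parallel cube P, the intersection satisfies |P ∩ A| ≤ C(n) · r · |P|^{(n−1)/n}. -/

import Mathlib

open MeasureTheory Metric ENNReal

/-- A thin cubic annulus `A = Q' \ Q''` between concentric axis-parallel cubes with
side lengths `ℓ' − ℓ'' = 2r` intersects any axis-parallel cube `P` in measure at most
`C(n) r |P|^{(n-1)/n}`. -/
theorem stmt11 (n : ℕ) (hn : 0 < n) :
    ∃ C : ℝ, 0 < C ∧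
      ∀ (c p : Fin n → ℝ) (l'' r s : ℝ), 0 ≤ l'' → 0 ≤ r → 0 < s →
        volume (ball p (s / 2) ∩
            (ball c ((l'' + 2 * r) / 2) \ ball c (l'' / 2))) ≤
          ENNReal.ofReal (C * r) *
            (volume (ball p (s / 2))) ^ (((n : ℝ) - 1) / n) := by
  refine ⟨2 * n, by positivity, ?_⟩
  intro c p l'' r s hl hr hs
  set R : ℝ := (l'' + 2 * r) / 2 with hRdef
  set ρ : ℝ := l'' / 2 with hρdef
  have hρ0 : 0 ≤ ρ := by positivity
  have hρR : ρ ≤ R := by rw [hRdef, hρdef]; linarith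
  set T : Fin n → Set ℝ := fun i => ball (c i) R \ ball (c i) ρ with hTdef
  set U : Fin n → Set (Fin n → ℝ) := fun i =>
    Set.pi Set.univ (Function.update (fun j => ball (p j) (s / 2)) i
      (ball (p i) (s / 2) ∩ T i)) with hUdef
  -- covering
  have hsub : ball p (s / 2) ∩ (ball c R \ ball c ρ) ⊆ ⋃ i, U i := by
    rintro x ⟨hxP, hxR, hxρ⟩
    obtain ⟨i, hi⟩ : ∃ i, ρ ≤ dist (x i) (c i) := by
      by_cases h0 : 0 < ρ
      · by_contra h
        push_neg at h
        exact hxρ (mem_ball.2 ((dist_pi_lt_iff h0).2 fun i => h i))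
      · exact ⟨⟨0, hn⟩, le_trans (le_of_not_gt h0) dist_nonneg⟩
    refine Set.mem_iUnion.2 ⟨i, ?_⟩
    intro j _
    rcases eq_or_ne j i with rfl | hne
    · rw [Function.update_self]
      refine ⟨mem_ball.2 (lt_of_le_of_lt (dist_le_pi_dist x p j) (mem_ball.1 hxP)),
        mem_ball.2 (lt_of_le_of_lt (dist_le_pi_dist x c j) (mem_ball.1 hxR)), ?_⟩
      exact fun hmem => absurd (mem_ball.1 hmem) (not_lt.2 hi)
    · rw [Function.update_of_ne hne]
      exact mem_ball.2 (lt_of_le_of_lt (dist_le_pi_dist x p j) (mem_ball.1 hxP))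
  -- volume of a slab fiber
  have hTvol : ∀ i, volume (T i) ≤ ENNReal.ofReal (2 * r) := by
    intro i
    have hsub2 : ball (c i) ρ ⊆ ball (c i) R := ball_subset_ball hρR
    rw [hTdef]
    rw [measure_diff hsub2 measurableSet_ball.nullMeasurableSet measure_ball_lt_top.ne,
      Real.volume_ball, Real.volume_ball, ← ENNReal.ofReal_sub _ (by positivity)]
    apply ENNReal.ofReal_le_ofReal
    rw [hRdef, hρdef]; linarith
  -- volume of each covering piece
  have hU : ∀ i, volume (U i) ≤ ENNReal.ofReal (2 * r) * ENNReal.ofReal s ^ (n - 1) := by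
    intro i
    rw [hUdef]
    rw [volume_pi_pi]
    have h1 : ∀ j, volume (Function.update (fun j => ball (p j) (s / 2)) i
        (ball (p i) (s / 2) ∩ T i) j)
        = Function.update (fun _ : Fin n => ENNReal.ofReal s) i
            (volume (ball (p i) (s / 2) ∩ T i)) j := by
      intro j
      rcases eq_or_ne j i with rfl | hne
      · simp
      · rw [Function.update_of_ne hne, Function.update_of_ne hne, Real.volume_ball,
          show 2 * (s / 2) = s from by ring]
    rw [Finset.prod_congr rfl fun j _ => h1 j,
      Finset.prod_update_of_mem (Finset.mem_univ i), Finset.prod_const,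
      Finset.card_sdiff_of_subset (Finset.subset_univ _), Finset.card_univ, Fintype.card_fin,
      Finset.card_singleton]
    exact mul_le_mul_left
      (le_trans (measure_mono Set.inter_subset_right) (hTvol i)) _
  -- volume of P
  have hPvol : volume (ball p (s / 2)) = ENNReal.ofReal s ^ n := by
    rw [volume_pi_ball _ (by positivity : (0:ℝ) < s / 2)]
    simp only [Real.volume_ball, show 2 * (s / 2) = s from by ring]
    rw [Finset.prod_const, Finset.card_univ, Fintype.card_fin]
  -- the rpow computation
  have hpow : ((ENNReal.ofReal s) ^ n : ℝ≥0∞) ^ (((n : ℝ) - 1) / n)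
      = (ENNReal.ofReal s) ^ (n - 1) := by
    rw [← ENNReal.rpow_natCast (ENNReal.ofReal s) n, ← ENNReal.rpow_mul]
    have hcast : (n : ℝ) * (((n : ℝ) - 1) / n) = ((n - 1 : ℕ) : ℝ) := by
      rw [Nat.cast_sub hn]
      field_simp
      norm_num
    rw [hcast, ENNReal.rpow_natCast]
  calc volume (ball p (s / 2) ∩ (ball c R \ ball c ρ))
      ≤ volume (⋃ i, U i) := measure_mono hsub
    _ ≤ ∑' i, volume (U i) := measure_iUnion_le _
    _ = ∑ i, volume (U i) := tsum_fintype _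
    _ ≤ ∑ _i : Fin n, ENNReal.ofReal (2 * r) * ENNReal.ofReal s ^ (n - 1) :=
        Finset.sum_le_sum fun i _ => hU i
    _ = (n : ℝ≥0∞) * (ENNReal.ofReal (2 * r) * ENNReal.ofReal s ^ (n - 1)) := by
        rw [Finset.sum_const, Finset.card_univ, Fintype.card_fin, nsmul_eq_mul]
    _ = ENNReal.ofReal (2 * (n : ℝ) * r) * ENNReal.ofReal s ^ (n - 1) := by
        have h : ENNReal.ofReal (2 * (n : ℝ) * r) = (n : ℝ≥0∞) * ENNReal.ofReal (2 * r) := by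
          rw [show (2 : ℝ) * n * r = (n : ℝ) * (2 * r) by ring,
            ENNReal.ofReal_mul (by positivity), ENNReal.ofReal_natCast]
        rw [h, mul_assoc]
    _ = ENNReal.ofReal (2 * (n : ℝ) * r) * (volume (ball p (s / 2))) ^ (((n : ℝ) - 1) / n) := by
        rw [hPvol, hpow]
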